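/- Under the Dawid-Skene model with known confusion matrices (all entries positive), the maximum likelihood label estimator ŷ_j = argmax_{g∈[k]} Π_{i,h} (π_{gh}^{(i)})^{1{X_{ij}=h}} satisfies, for each item j with true label y_j, P(ŷ_j ≠ y_j) ≤ (k-1)·exp(-m·I(π)), where I(π) = min_{g≠h} C(π_{g*},π_{h*}) and C(π_{g*},π_{h*}) = -min_{0≤t≤1}(1/m)Σ_{i=1}^m log(Σ_{l=1}^k (π_{gl}^{(i)})^{1-t}(π_{hl}^{(i)})^t). -/

import Mathlib

open MeasureTheory ProbabilityTheory

/-- Pointwise Chernoff-type bound and factorization: the probability mass of the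
bad region is bounded by a product of moment sums. -/
lemma ds_chernoff_core {m k : ℕ} (pa pg : Fin m → Fin k → ℝ)
    (hpa : ∀ i l, 0 < pa i l) (hpg : ∀ i l, 0 < pg i l)
    {t : ℝ} (ht0 : 0 ≤ t) (ht1 : t ≤ 1) :
    ∑ v ∈ Finset.univ.filter
        (fun v : Fin m → Fin k => ∏ i, pa i (v i) ≤ ∏ i, pg i (v i)),
      ∏ i, pa i (v i)
    ≤ ∏ i, ∑ l, pa i l ^ (1 - t) * pg i l ^ t := by
  have key : ∀ v : Fin m → Fin k, (∏ i, pa i (v i) ≤ ∏ i, pg i (v i)) →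
      ∏ i, pa i (v i) ≤ ∏ i, pa i (v i) ^ (1 - t) * pg i (v i) ^ t := by
    intro v hv
    have hApos : 0 < ∏ i, pa i (v i) := Finset.prod_pos fun i _ => hpa i (v i)
    have hGpos : 0 < ∏ i, pg i (v i) := Finset.prod_pos fun i _ => hpg i (v i)
    have hfac : ∏ i, pa i (v i) ^ (1 - t) * pg i (v i) ^ t
        = (∏ i, pa i (v i)) ^ (1 - t) * (∏ i, pg i (v i)) ^ t := by
      rw [Finset.prod_mul_distrib,
        Real.finset_prod_rpow _ _ (fun i _ => (hpa i (v i)).le) _,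
        Real.finset_prod_rpow _ _ (fun i _ => (hpg i (v i)).le) _]
    rw [hfac]
    have h1 : (∏ i, pa i (v i)) ^ t ≤ (∏ i, pg i (v i)) ^ t :=
      Real.rpow_le_rpow hApos.le hv ht0
    calc ∏ i, pa i (v i)
        = (∏ i, pa i (v i)) ^ (1 - t) * (∏ i, pa i (v i)) ^ t := by
          rw [← Real.rpow_add hApos, sub_add_cancel, Real.rpow_one]
      _ ≤ (∏ i, pa i (v i)) ^ (1 - t) * (∏ i, pg i (v i)) ^ t :=
          mul_le_mul_of_nonneg_left h1 (Real.rpow_nonneg hApos.le _)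
  calc ∑ v ∈ Finset.univ.filter
        (fun v : Fin m → Fin k => ∏ i, pa i (v i) ≤ ∏ i, pg i (v i)),
      ∏ i, pa i (v i)
      ≤ ∑ v ∈ Finset.univ.filter
          (fun v : Fin m → Fin k => ∏ i, pa i (v i) ≤ ∏ i, pg i (v i)),
        ∏ i, pa i (v i) ^ (1 - t) * pg i (v i) ^ t := by
        refine Finset.sum_le_sum fun v hv => key v ?_
        simpa using (Finset.mem_filter.mp hv).2
    _ ≤ ∑ v : Fin m → Fin k, ∏ i, pa i (v i) ^ (1 - t) * pg i (v i) ^ t := by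
        refine Finset.sum_le_sum_of_subset_of_nonneg (Finset.filter_subset _ _)
          fun v _ _ => Finset.prod_nonneg fun i _ =>
            mul_nonneg (Real.rpow_nonneg (hpa i (v i)).le _)
              (Real.rpow_nonneg (hpg i (v i)).le _)
    _ = ∏ i, ∑ l, pa i l ^ (1 - t) * pg i l ^ t := by
        rw [Finset.prod_univ_sum]
        simp [Fintype.piFinset_univ]

/-- The moment product written as an exponential. -/
lemma ds_prod_eq_exp {m k : ℕ} (hk : 0 < k) (pa pg : Fin m → Fin k → ℝ)
    (hpa : ∀ i l, 0 < pa i l) (hpg : ∀ i l, 0 < pg i l) (t : ℝ) :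
    ∏ i, ∑ l, pa i l ^ (1 - t) * pg i l ^ t
      = Real.exp ((m : ℝ) *
          ((1 / (m : ℝ)) * ∑ i, Real.log (∑ l, pa i l ^ (1 - t) * pg i l ^ t))) := by
  have hpos : ∀ i : Fin m, 0 < ∑ l, pa i l ^ (1 - t) * pg i l ^ t := fun i => by
    have : Nonempty (Fin k) := ⟨⟨0, hk⟩⟩
    exact Finset.sum_pos (fun l _ =>
      mul_pos (Real.rpow_pos_of_pos (hpa i l) _) (Real.rpow_pos_of_pos (hpg i l) _))
      Finset.univ_nonempty
  rcases Nat.eq_zero_or_pos m with hm | hm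
  · subst hm; simp
  · have hm' : (m : ℝ) ≠ 0 := Nat.cast_ne_zero.mpr hm.ne'
    rw [show (m : ℝ) * ((1 / (m : ℝ)) *
        ∑ i, Real.log (∑ l, pa i l ^ (1 - t) * pg i l ^ t))
        = ∑ i, Real.log (∑ l, pa i l ^ (1 - t) * pg i l ^ t) by field_simp,
      Real.exp_sum]
    exact Finset.prod_congr rfl fun i _ => (Real.exp_log (hpos i)).symm

/-- The infimum over `[0,1]` of a continuous function is attained. -/
lemma ds_exists_min (f : ℝ → ℝ) (hf : ContinuousOn f (Set.Icc 0 1)) :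
    ∃ t ∈ Set.Icc (0 : ℝ) 1, f t = sInf (f '' Set.Icc 0 1) := by
  obtain ⟨x, hx, hmin⟩ := isCompact_Icc.exists_isMinOn
    (Set.nonempty_Icc.mpr zero_le_one) hf
  refine ⟨x, hx, ?_⟩
  have : IsLeast (f '' Set.Icc 0 1) (f x) :=
    ⟨⟨x, hx, rfl⟩, by rintro _ ⟨y, hy, rfl⟩; exact hmin hy⟩
  exact (this.csInf_eq).symm

lemma ds_continuous {m k : ℕ} (hk : 0 < k) (pa pg : Fin m → Fin k → ℝ)
    (hpa : ∀ i l, 0 < pa i l) (hpg : ∀ i l, 0 < pg i l) :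
    Continuous (fun t : ℝ =>
      (1 / (m : ℝ)) * ∑ i, Real.log (∑ l, pa i l ^ (1 - t) * pg i l ^ t)) := by
  refine continuous_const.mul (continuous_finset_sum _ fun i _ => ?_)
  have hsum : Continuous fun t : ℝ => ∑ l, pa i l ^ (1 - t) * pg i l ^ t := by
    refine continuous_finset_sum _ fun l _ => Continuous.mul ?_ ?_
    · exact (continuous_iff_continuousAt.mpr fun b =>
        Real.continuousAt_const_rpow (hpa i l).ne').comp
        (continuous_const.sub continuous_id)
    · exact continuous_iff_continuousAt.mpr fun b =>
        Real.continuousAt_const_rpow (hpg i l).ne'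
  refine hsum.log fun t => ?_
  have : Nonempty (Fin k) := ⟨⟨0, hk⟩⟩
  exact (Finset.sum_pos (fun l _ =>
    mul_pos (Real.rpow_pos_of_pos (hpa i l) _) (Real.rpow_pos_of_pos (hpg i l) _))
    Finset.univ_nonempty).ne'

/-- Upper bound for the MLE under the Dawid–Skene model: if X_i are independent with
X_i ~ π_{a*}^{(i)} (true label a, all entries positive) and ŷ is a maximum-likelihood
label (so that ŷ ≠ a only if some g ≠ a has likelihood at least that of a), then
P(ŷ ≠ a) ≤ (k-1) exp(-m I(π)), where I(π) = min_{g≠h} C(π_{g*},π_{h*}) and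
C(π_{g*},π_{h*}) = -min_{t∈[0,1]} (1/m) Σ_i log Σ_l (π^{(i)}_{gl})^{1-t}(π^{(i)}_{hl})^t. -/
theorem mle_error_bound (m k : ℕ) (hk : 2 ≤ k)
    {Ω : Type*} [MeasurableSpace Ω] (μ : Measure Ω) [IsProbabilityMeasure μ]
    (π : Fin k → Fin m → Fin k → ℝ)
    (hpos : ∀ g i l, 0 < π g i l) (hsum : ∀ g i, ∑ l, π g i l = 1)
    (X : Fin m → Ω → Fin k) (hmeas : ∀ i, Measurable (X i))
    (hindep : iIndepFun X μ)
    (a : Fin k)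
    (hdist : ∀ i l, μ {ω | X i ω = l} = ENNReal.ofReal (π a i l))
    (yhat : Ω → Fin k)
    (hyhat : ∀ ω, yhat ω ≠ a →
      ∃ g, g ≠ a ∧ ∏ i, π a i (X i ω) ≤ ∏ i, π g i (X i ω)) :
    (μ {ω | yhat ω ≠ a}).toReal ≤
      ((k : ℝ) - 1) * Real.exp (-(m : ℝ) *
        sInf {x : ℝ | ∃ g h : Fin k, g ≠ h ∧
          x = -sInf ((fun t : ℝ =>
              (1 / (m : ℝ)) * ∑ i, Real.log (∑ l, π g i l ^ (1 - t) * π h i l ^ t)) ''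
            Set.Icc (0 : ℝ) 1)}) := by
  classical
  set F : Fin k → Fin k → ℝ → ℝ := fun g h t =>
    (1 / (m : ℝ)) * ∑ i, Real.log (∑ l, π g i l ^ (1 - t) * π h i l ^ t) with hF
  set I : ℝ := sInf {x : ℝ | ∃ g h : Fin k, g ≠ h ∧
      x = -sInf (F g h '' Set.Icc (0 : ℝ) 1)} with hI
  -- the bad events
  set E : Fin k → Set Ω := fun g =>
    {ω | ∏ i, π a i (X i ω) ≤ ∏ i, π g i (X i ω)} with hE
  -- measure of each cylinder
  have hcyl : ∀ v : Fin m → Fin k,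
      μ {ω | ∀ i, X i ω = v i} = ENNReal.ofReal (∏ i, π a i (v i)) := by
    intro v
    have h1 : {ω | ∀ i, X i ω = v i} = ⋂ i, X i ⁻¹' {v i} := by
      ext ω; simp [Set.mem_iInter]
    rw [h1, hindep.meas_iInter (fun i => ⟨{v i}, MeasurableSet.singleton _, rfl⟩)]
    rw [ENNReal.ofReal_prod_of_nonneg (fun i _ => (hpos a i (v i)).le)]
    refine Finset.prod_congr rfl fun i _ => ?_
    rw [← hdist i (v i)]; rfl
  -- measure of a bad event
  have hEmeas : ∀ g : Fin k, (μ (E g)).toReal =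
      ∑ v ∈ Finset.univ.filter
        (fun v : Fin m → Fin k => ∏ i, π a i (v i) ≤ ∏ i, π g i (v i)),
      ∏ i, π a i (v i) := by
    intro g
    have hdecomp : E g = ⋃ v ∈ Finset.univ.filter
        (fun v : Fin m → Fin k => ∏ i, π a i (v i) ≤ ∏ i, π g i (v i)),
        {ω | ∀ i, X i ω = v i} := by
      ext ω
      simp only [hE, Set.mem_setOf_eq, Set.mem_iUnion, Finset.mem_filter,
        Finset.mem_univ, true_and]
      constructor
      · intro h
        exact ⟨fun i => X i ω, h, fun i => rfl⟩
      · rintro ⟨v, hv, hvo⟩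
        simpa only [hvo] using hv
    have hdisj : (Finset.univ.filter
        (fun v : Fin m → Fin k => ∏ i, π a i (v i) ≤ ∏ i, π g i (v i)) : Set (Fin m → Fin k)).PairwiseDisjoint
        (fun v => {ω | ∀ i, X i ω = v i}) := by
      intro v _ w _ hvw
      refine Set.disjoint_left.mpr fun ω hv hw => hvw ?_
      exact funext fun i => (hv i).symm.trans (hw i)
    have hms : ∀ v : Fin m → Fin k, MeasurableSet {ω | ∀ i, X i ω = v i} := by
      intro v
      have : {ω | ∀ i, X i ω = v i} = ⋂ i, X i ⁻¹' {v i} := by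
        ext ω; simp [Set.mem_iInter]
      rw [this]
      exact MeasurableSet.iInter fun i => hmeas i (MeasurableSet.singleton _)
    have hsum2 : (∑ v ∈ Finset.univ.filter
        (fun v : Fin m → Fin k => ∏ i, π a i (v i) ≤ ∏ i, π g i (v i)),
          μ {ω | ∀ i, X i ω = v i})
        = ENNReal.ofReal (∑ v ∈ Finset.univ.filter
            (fun v : Fin m → Fin k => ∏ i, π a i (v i) ≤ ∏ i, π g i (v i)),
          ∏ i, π a i (v i)) := by
      rw [ENNReal.ofReal_sum_of_nonneg
        (fun v _ => Finset.prod_nonneg fun i _ => (hpos a i (v i)).le)]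
      exact Finset.sum_congr rfl fun v _ => hcyl v
    rw [hdecomp, measure_biUnion_finset hdisj (fun v _ => hms v), hsum2,
      ENNReal.toReal_ofReal
        (Finset.sum_nonneg fun v _ => Finset.prod_nonneg fun i _ => (hpos a i (v i)).le)]
  -- per-pair bound
  have hbound : ∀ g : Fin k, g ≠ a →
      (μ (E g)).toReal ≤ Real.exp (-(m : ℝ) * I) := by
    intro g hg
    obtain ⟨t, ht, hmin⟩ := ds_exists_min (F a g)
      ((ds_continuous (by omega) (π a) (π g) (fun i l => hpos a i l) (fun i l => hpos g i l)).continuousOn)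
    have hIle : I ≤ -sInf (F a g '' Set.Icc (0 : ℝ) 1) := by
      have hbdd : BddBelow {x : ℝ | ∃ g h : Fin k, g ≠ h ∧
          x = -sInf (F g h '' Set.Icc (0 : ℝ) 1)} := by
        refine (Set.Finite.bddBelow ((Set.finite_range
          (fun p : Fin k × Fin k => -sInf (F p.1 p.2 '' Set.Icc (0 : ℝ) 1))))).mono ?_
        rintro x ⟨g', h', _, rfl⟩
        exact ⟨(g', h'), rfl⟩
      exact csInf_le hbdd ⟨a, g, (Ne.symm hg), rfl⟩
    calc (μ (E g)).toReal
        = ∑ v ∈ Finset.univ.filter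
            (fun v : Fin m → Fin k => ∏ i, π a i (v i) ≤ ∏ i, π g i (v i)),
          ∏ i, π a i (v i) := hEmeas g
      _ ≤ ∏ i, ∑ l, π a i l ^ (1 - t) * π g i l ^ t :=
          ds_chernoff_core (π a) (π g) (fun i l => hpos a i l) (fun i l => hpos g i l)
            ht.1 ht.2
      _ = Real.exp ((m : ℝ) * F a g t) :=
          ds_prod_eq_exp (by omega) (π a) (π g) (fun i l => hpos a i l)
            (fun i l => hpos g i l) t
      _ ≤ Real.exp (-(m : ℝ) * I) := by
          rw [Real.exp_le_exp, hmin]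
          have : (m : ℝ) * sInf (F a g '' Set.Icc (0 : ℝ) 1)
              = -((m : ℝ) * (-sInf (F a g '' Set.Icc (0 : ℝ) 1))) := by ring
          rw [this, neg_mul]
          exact neg_le_neg (mul_le_mul_of_nonneg_left hIle (Nat.cast_nonneg m))
  -- union bound
  have hsub : {ω | yhat ω ≠ a} ⊆ ⋃ g ∈ Finset.univ.erase a, E g := by
    intro ω hω
    obtain ⟨g, hg, hle⟩ := hyhat ω hω
    exact Set.mem_biUnion (Finset.mem_erase.mpr ⟨hg, Finset.mem_univ g⟩) hle
  have hunion : μ {ω | yhat ω ≠ a} ≤ ∑ g ∈ Finset.univ.erase a, μ (E g) :=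
    (measure_mono hsub).trans (measure_biUnion_finset_le _ _)
  have hfin : ∀ g ∈ Finset.univ.erase a, μ (E g) ≠ ⊤ := fun g _ => measure_ne_top μ _
  have h1 : (μ {ω | yhat ω ≠ a}).toReal ≤ ∑ g ∈ Finset.univ.erase a, (μ (E g)).toReal := by
    rw [← ENNReal.toReal_sum hfin]
    exact ENNReal.toReal_mono (ENNReal.sum_ne_top.mpr hfin) hunion
  calc (μ {ω | yhat ω ≠ a}).toReal
      ≤ ∑ g ∈ Finset.univ.erase a, (μ (E g)).toReal := h1
    _ ≤ ∑ g ∈ Finset.univ.erase a, Real.exp (-(m : ℝ) * I) :=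
        Finset.sum_le_sum fun g hg => hbound g (Finset.mem_erase.mp hg).1
    _ = ((k : ℝ) - 1) * Real.exp (-(m : ℝ) * I) := by
        rw [Finset.sum_const, Finset.card_erase_of_mem (Finset.mem_univ a),
          Finset.card_univ, Fintype.card_fin, nsmul_eq_mul]
        congr 1
        rw [Nat.cast_sub (by omega), Nat.cast_one]
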